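/- Every representable polymatroid is proportional to an entropic polymatroid: if P = ([N], f) is representable over a finite field F_q, then the vector (f(A)·log₂ q : A ⊆ [N], A ≠ ∅) is the entropy vector of some collection of N discrete random variables. -/

import Mathlib

/-- Joint Shannon entropy (in bits) of a discrete random variable `f` on a finite
probability space with mass function `p`. -/
noncomputable def jointEntropy {Ω β : Type*} [Fintype Ω] [DecidableEq β]
    (p : Ω → ℝ) (f : Ω → β) : ℝ :=
  - ∑ b ∈ Finset.univ.image f,
      (∑ ω ∈ Finset.univ.filter (fun ω => f ω = b), p ω) *
        Real.logb 2 (∑ ω ∈ Finset.univ.filter (fun ω => f ω = b), p ω)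

/-- The tuple of random variables `X_A = (X_i : i ∈ A)`. -/
def restrictRV {Ω : Type*} {N : ℕ} (X : Fin N → Ω → ℕ) (A : Finset (Fin N)) (ω : Ω) :
    Fin N → Option ℕ :=
  fun i => if i ∈ A then some (X i ω) else none

lemma fibers_card_mul {Ω β : Type*} [Fintype Ω] [DecidableEq β]
    (g : Ω → β) (k : ℕ)
    (hfib : ∀ b ∈ Finset.univ.image g,
      (Finset.univ.filter (fun ω => g ω = b)).card = k) :
    (Finset.univ.image g).card * k = Fintype.card Ω := by
  classical
  rw [← Finset.card_univ (α := Ω),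
    Finset.card_eq_sum_card_fiberwise
      (f := g) (t := Finset.univ.image g)
      (fun x _ => Finset.mem_image_of_mem g (Finset.mem_univ x)),
    Finset.sum_congr rfl hfib, Finset.sum_const, smul_eq_mul]

lemma jointEntropy_uniform_equal_fibers {Ω β : Type*} [Fintype Ω] [DecidableEq β]
    (g : Ω → β) (k : ℕ) (hk : 0 < k)
    (hfib : ∀ b ∈ Finset.univ.image g,
      (Finset.univ.filter (fun ω => g ω = b)).card = k) :
    jointEntropy (fun _ => (Fintype.card Ω : ℝ)⁻¹) g
      = Real.logb 2 ((Finset.univ.image g).card) := by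
  classical
  set n := (Finset.univ.image g).card with hn
  have hnk : n * k = Fintype.card Ω := fibers_card_mul g k hfib
  by_cases hn0 : n = 0
  · have himg : Finset.univ.image g = ∅ := Finset.card_eq_zero.mp hn0
    rw [jointEntropy, himg, hn0]
    simp
  have hnpos : 0 < n := Nat.pos_of_ne_zero hn0
  have hnR : (n : ℝ) ≠ 0 := Nat.cast_ne_zero.mpr hn0
  have hsum : ∀ b ∈ Finset.univ.image g,
      (∑ ω ∈ Finset.univ.filter (fun ω => g ω = b),
        (fun _ : Ω => (Fintype.card Ω : ℝ)⁻¹) ω) = (n : ℝ)⁻¹ := by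
    intro b hb
    rw [Finset.sum_const, hfib b hb, nsmul_eq_mul, ← hnk]
    rw [Nat.cast_mul, mul_inv]
    have hkR : (k : ℝ) ≠ 0 := Nat.cast_ne_zero.mpr hk.ne'
    field_simp
  rw [jointEntropy, Finset.sum_congr rfl (fun b hb => by rw [hsum b hb]),
    Finset.sum_const, ← hn, nsmul_eq_mul, Real.logb_inv]
  field_simp

lemma dualRestrict_eq_iff {K V : Type*} [Field K] [AddCommGroup V] [Module K V]
    (W : Submodule K V) (φ ψ : Module.Dual K V) :
    W.dualRestrict φ = W.dualRestrict ψ ↔ ∀ x ∈ W, φ x = ψ x := by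
  constructor
  · intro h x hx
    have := DFunLike.congr_fun h ⟨x, hx⟩
    simpa [Submodule.dualRestrict_apply] using this
  · intro h
    ext ⟨x, hx⟩
    simpa [Submodule.dualRestrict_apply] using h x hx

lemma forall_mem_iSup_iff {K V ι : Type*} [Field K] [AddCommGroup V] [Module K V]
    (A : Finset ι) (Vi : ι → Submodule K V) (φ ψ : Module.Dual K V) :
    (∀ i ∈ A, ∀ x ∈ Vi i, φ x = ψ x) ↔ ∀ x ∈ (⨆ i ∈ A, Vi i), φ x = ψ x := by
  have key : ∀ (U : Submodule K V),
      (∀ x ∈ U, φ x = ψ x) ↔ U ≤ LinearMap.ker (φ - ψ) := by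
    intro U
    constructor
    · intro h x hx
      simp [LinearMap.mem_ker, sub_eq_zero, h x hx]
    · intro h x hx
      have := h hx
      simpa [LinearMap.mem_ker, sub_eq_zero] using this
  simp only [key]
  exact iSup₂_le_iff.symm

/-- every representable polymatroid is proportional to an entropic
polymatroid: scaling by `log₂ q` yields an entropy vector. -/
theorem representable_proportional_entropic
    {F : Type*} [Field F] [Fintype F] {q N r : ℕ}
    (hq : Fintype.card F = q)
    (V : Fin N → Submodule F (Fin r → F))
    (f : Finset (Fin N) → ℕ)
    (hf : ∀ S : Finset (Fin N), f S = Module.finrank F ↥(⨆ i ∈ S, V i)) :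
    ∃ (m : ℕ) (p : Fin m → ℝ) (X : Fin N → Fin m → ℕ),
      (∀ ω, 0 ≤ p ω) ∧ (∑ ω, p ω = 1) ∧
      ∀ A : Finset (Fin N), A.Nonempty →
        jointEntropy p (restrictRV X A) = (f A : ℝ) * Real.logb 2 q := by
  classical
  have hqpos : 0 < q := hq ▸ Fintype.card_pos
  set Ω := Module.Dual F (Fin r → F) with hΩ
  have hFinΩ : Finite Ω :=
    Finite.of_injective (fun φ => (φ : (Fin r → F) → F)) DFunLike.coe_injective
  letI : Fintype Ω := Fintype.ofFinite Ω
  set m := Fintype.card Ω with hm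
  have hmpos : 0 < m := Fintype.card_pos
  set e : Fin m ≃ Ω := (Fintype.equivFin Ω).symm with he
  -- encodings of restricted duals into ℕ
  have henc : ∀ i : Fin N, ∃ c : Module.Dual F ↥(V i) → ℕ, Function.Injective c := by
    intro i
    have : Finite (Module.Dual F ↥(V i)) :=
      Finite.of_injective (fun φ => (φ : ↥(V i) → F)) DFunLike.coe_injective
    exact exists_injective_nat _
  choose enc hencInj using henc
  set X : Fin N → Fin m → ℕ := fun i ω => enc i ((V i).dualRestrict (e ω)) with hX
  refine ⟨m, fun _ => (m : ℝ)⁻¹, X, fun ω => by positivity, ?_, ?_⟩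
  · rw [Finset.sum_const, Finset.card_univ, Fintype.card_fin, nsmul_eq_mul]
    field_simp
  intro A hA
  set W : Submodule F (Fin r → F) := ⨆ i ∈ A, V i with hW
  -- key: fibers of restrictRV X A = fibers of W.dualRestrict ∘ e
  have hkey : ∀ ω ω' : Fin m, restrictRV X A ω = restrictRV X A ω' ↔
      W.dualRestrict (e ω) = W.dualRestrict (e ω') := by
    intro ω ω'
    rw [dualRestrict_eq_iff, ← forall_mem_iSup_iff]
    constructor
    · intro h i hi x hx
      have h1 := congrFun h i
      simp only [restrictRV, if_pos hi, Option.some.injEq] at h1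
      have h2 : (V i).dualRestrict (e ω) = (V i).dualRestrict (e ω') := hencInj i h1
      exact (dualRestrict_eq_iff _ _ _).mp h2 x hx
    · intro h
      funext i
      simp only [restrictRV]
      by_cases hi : i ∈ A
      · rw [if_pos hi, if_pos hi]
        have : (V i).dualRestrict (e ω) = (V i).dualRestrict (e ω') :=
          (dualRestrict_eq_iff _ _ _).mpr (h i hi)
        rw [hX]
        simp only [this]
      · rw [if_neg hi, if_neg hi]
  -- each fiber has cardinality = card of kernel
  letI : Fintype ↥(LinearMap.ker W.dualRestrict) := Fintype.ofFinite _
  set k := Fintype.card ↥(LinearMap.ker W.dualRestrict) with hkdef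
  have hkpos : 0 < k := Fintype.card_pos
  have hfib : ∀ b ∈ Finset.univ.image (restrictRV X A),
      (Finset.univ.filter (fun ω => restrictRV X A ω = b)).card = k := by
    intro b hb
    obtain ⟨ω₀, -, rfl⟩ := Finset.mem_image.mp hb
    rw [← Fintype.card_subtype]
    refine Fintype.card_congr ?_
    refine
      { toFun := fun ω => ⟨e ω.1 - e ω₀, by
          rw [LinearMap.mem_ker, map_sub, sub_eq_zero]
          exact (hkey _ _).mp ω.2⟩
        invFun := fun ψ => ⟨e.symm (ψ.1 + e ω₀), ?_⟩
        left_inv := fun ω => by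
          apply Subtype.ext
          simp
        right_inv := fun ψ => by
          apply Subtype.ext
          simp }
    apply (hkey _ _).mpr
    have hψ : W.dualRestrict ψ.1 = 0 := LinearMap.mem_ker.mp ψ.2
    rw [e.apply_symm_apply, map_add, hψ, zero_add]
  -- entropy value
  have hent := jointEntropy_uniform_equal_fibers (restrictRV X A) k hkpos hfib
  rw [Fintype.card_fin] at hent
  -- cardinalities
  have hrΩ : Module.finrank F Ω = r := by
    show Module.finrank F (Module.Dual F (Fin r → F)) = r
    rw [Subspace.dual_finrank_eq, Module.finrank_pi, Fintype.card_fin]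
  have hmq : m = q ^ r := by
    rw [hm, Module.card_eq_pow_finrank (K := F) (V := Ω), hq, hrΩ]
  have hfA : f A = Module.finrank F ↥W := hf A
  have hrange : Module.finrank F ↥(LinearMap.range W.dualRestrict) = f A := by
    rw [LinearMap.range_eq_top.mpr Subspace.dualRestrict_surjective, finrank_top,
      Subspace.dual_finrank_eq, hfA]
  have hrk := LinearMap.finrank_range_add_finrank_ker (W.dualRestrict (R := F))
  rw [hrange, hrΩ] at hrk
  have hfAr : f A ≤ r := le_of_add_le_left hrk.le
  have hker : Module.finrank F ↥(LinearMap.ker W.dualRestrict) = r - f A := by omega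
  have hk : k = q ^ (r - f A) := by
    rw [hkdef, Module.card_eq_pow_finrank (K := F), hq, hker]
  have hnk := fibers_card_mul (restrictRV X A) k hfib
  rw [Fintype.card_fin] at hnk
  have hn : (Finset.univ.image (restrictRV X A)).card = q ^ f A := by
    have : (Finset.univ.image (restrictRV X A)).card * q ^ (r - f A)
        = q ^ f A * q ^ (r - f A) := by
      rw [← hk, hnk, hmq, hk, ← pow_add, Nat.add_sub_cancel' hfAr]
    exact Nat.eq_of_mul_eq_mul_right (Nat.pow_pos hqpos) this
  rw [hent, hn]
  push_cast
  rw [Real.logb_pow]
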